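/- Let f(x) = (x−1)^6 and g(x) = (x²+1)(x²−x+1)², let A, B ∈ GL₆(ℤ) be their companion matrices, and let v = (A⁻¹B − I)(e₆). Then v = (−4, 11, −16, 11, −4, 0), and the matrix γ = B·A⁻¹·B⁶·A satisfies: the coefficient of e₆ in γ(v) lies in {1, −1, 2, −2}, and the three vectors v, γ(v), γ⁻¹(v) are linearly independent over ℚ. -/

import Mathlib

open Matrix Polynomial

/-- The companion matrix of a monic polynomial `p` of degree `n`: it sends
`e_i ↦ e_{i+1}` for `1 ≤ i ≤ n-1` (zero-indexed: column `j` is `e_{j+1}` when `j+1 < n`),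
and `e_n ↦ -(c_0 e_1 + c_1 e_2 + ⋯ + c_{n-1} e_n)`. -/
def companionMat (n : ℕ) (p : Polynomial ℤ) : Matrix (Fin n) (Fin n) ℤ :=
  Matrix.of fun i j =>
    if (j : ℕ) + 1 < n then (if (i : ℕ) = (j : ℕ) + 1 then 1 else 0) else -p.coeff (i : ℕ)

private lemma gl_inv_coe (u : GL (Fin 6) ℤ) (M : Matrix (Fin 6) (Fin 6) ℤ)
    (h : (u : Matrix (Fin 6) (Fin 6) ℤ) * M = 1) :
    ((u⁻¹ : GL (Fin 6) ℤ) : Matrix (Fin 6) (Fin 6) ℤ) = M := by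
  calc (↑u⁻¹ : Matrix (Fin 6) (Fin 6) ℤ)
      = ↑u⁻¹ * ((u : Matrix (Fin 6) (Fin 6) ℤ) * M) := by rw [h, mul_one]
    _ = (↑u⁻¹ * (u : Matrix (Fin 6) (Fin 6) ℤ)) * M := by rw [mul_assoc]
    _ = M := by rw [Units.inv_mul, one_mul]

set_option maxHeartbeats 2000000 in
/-- for γ = BA⁻¹B⁶A the coefficient of e₆ in γ(v) lies in {1, -1, 2, -2} and v, γ(v), γ⁻¹(v) are linearly independent over ℚ. -/
theorem entry28_certificate (f g : Polynomial ℤ)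
    (hf : f = (Polynomial.X - 1) ^ 6)
    (hg : g = (Polynomial.X ^ 2 + 1) * (Polynomial.X ^ 2 - Polynomial.X + 1) ^ 2)
    (A B : GL (Fin 6) ℤ)
    (hA : (A : Matrix (Fin 6) (Fin 6) ℤ) = companionMat 6 f)
    (hB : (B : Matrix (Fin 6) (Fin 6) ℤ) = companionMat 6 g)
    (v : Fin 6 → ℤ)
    (hv : v = ((A⁻¹ * B : GL (Fin 6) ℤ) : Matrix (Fin 6) (Fin 6) ℤ) *ᵥ
      Pi.single (5 : Fin 6) 1 - Pi.single (5 : Fin 6) 1)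
    (γ : GL (Fin 6) ℤ) (hγ : γ = B * A⁻¹ * B ^ 6 * A) :
    v = ![-4, 11, -16, 11, -4, 0] ∧
    ((γ : Matrix (Fin 6) (Fin 6) ℤ) *ᵥ v) 5 ∈ ({1, -1, 2, -2} : Set ℤ) ∧
    LinearIndependent ℚ
      ![(fun i => (v i : ℚ)),
        (fun i => (((γ : Matrix (Fin 6) (Fin 6) ℤ) *ᵥ v) i : ℚ)),
        (fun i => (((↑γ⁻¹ : Matrix (Fin 6) (Fin 6) ℤ) *ᵥ v) i : ℚ))] := by
  have hfC : f = C 1 * X ^ 6 + C (-6) * X ^ 5 + C 15 * X ^ 4 + C (-20) * X ^ 3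
      + C 15 * X ^ 2 + C (-6) * X + C 1 := by
    rw [hf]; simp only [_root_.map_one, map_neg, map_ofNat]; ring
  have hgC : g = C 1 * X ^ 6 + C (-2) * X ^ 5 + C 4 * X ^ 4 + C (-4) * X ^ 3
      + C 4 * X ^ 2 + C (-2) * X + C 1 := by
    rw [hg]; simp only [_root_.map_one, map_neg, map_ofNat]; ring
  have hA' : (A : Matrix (Fin 6) (Fin 6) ℤ) =
      !![0,0,0,0,0,-1; 1,0,0,0,0,6; 0,1,0,0,0,-15; 0,0,1,0,0,20; 0,0,0,1,0,-15; 0,0,0,0,1,6] := by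
    have hc : ∀ i : Fin 6, f.coeff (i : ℕ) = ![1,-6,15,-20,15,-6] i := by
      intro i
      fin_cases i <;>
        simp [hfC, coeff_add, coeff_C_mul, coeff_X_pow, coeff_C, coeff_one, coeff_X] <;> decide
    rw [hA]; ext i j
    simp only [companionMat, Matrix.of_apply]
    by_cases h : (j : ℕ) + 1 < 6
    · rw [if_pos h]
      fin_cases i <;> fin_cases j <;> first | decide | exact absurd h (by decide)
    · rw [if_neg h, hc]
      fin_cases i <;> fin_cases j <;> first | decide | exact absurd h (by decide)
  have hB' : (B : Matrix (Fin 6) (Fin 6) ℤ) =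
      !![0,0,0,0,0,-1; 1,0,0,0,0,2; 0,1,0,0,0,-4; 0,0,1,0,0,4; 0,0,0,1,0,-4; 0,0,0,0,1,2] := by
    have hc : ∀ i : Fin 6, g.coeff (i : ℕ) = ![1,-2,4,-4,4,-2] i := by
      intro i
      fin_cases i <;>
        simp [hgC, coeff_add, coeff_C_mul, coeff_X_pow, coeff_C, coeff_one, coeff_X] <;> decide
    rw [hB]; ext i j
    simp only [companionMat, Matrix.of_apply]
    by_cases h : (j : ℕ) + 1 < 6
    · rw [if_pos h]
      fin_cases i <;> fin_cases j <;> first | decide | exact absurd h (by decide)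
    · rw [if_neg h, hc]
      fin_cases i <;> fin_cases j <;> first | decide | exact absurd h (by decide)
  have hAi : ((A⁻¹ : GL (Fin 6) ℤ) : Matrix (Fin 6) (Fin 6) ℤ) =
      !![6,1,0,0,0,0; -15,0,1,0,0,0; 20,0,0,1,0,0; -15,0,0,0,1,0; 6,0,0,0,0,1; -1,0,0,0,0,0] := by
    apply gl_inv_coe; rw [hA']; decide
  have hBi : ((B⁻¹ : GL (Fin 6) ℤ) : Matrix (Fin 6) (Fin 6) ℤ) =
      !![2,1,0,0,0,0; -4,0,1,0,0,0; 4,0,0,1,0,0; -4,0,0,0,1,0; 2,0,0,0,0,1; -1,0,0,0,0,0] := by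
    apply gl_inv_coe; rw [hB']; decide
  have hγ' : (γ : Matrix (Fin 6) (Fin 6) ℤ) =
      !![-2,0,4,4,-2,-3; -5,-2,8,12,0,-18; 16,3,-30,-36,10,44; -28,-6,51,62,-16,-72;
         18,4,-34,-41,12,48; -8,-4,12,18,-1,-22] := by
    rw [hγ]
    show (B : Matrix (Fin 6) (Fin 6) ℤ) * ((A⁻¹ : GL (Fin 6) ℤ) : Matrix (Fin 6) (Fin 6) ℤ) * (B : Matrix (Fin 6) (Fin 6) ℤ)^6 * (A : Matrix (Fin 6) (Fin 6) ℤ) = _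
    rw [hA', hB', hAi]; decide
  have hγi : ((γ⁻¹ : GL (Fin 6) ℤ) : Matrix (Fin 6) (Fin 6) ℤ) =
      !![62,15,-14,-20,-4,8; -160,-32,47,54,4,-26; 232,48,-66,-77,-6,36;
         -172,-34,52,58,3,-28; 74,16,-20,-24,-2,11; -11,-2,4,4,0,-2] := by
    apply gl_inv_coe; rw [hγ']; decide
  have hv' : v = ![-4, 11, -16, 11, -4, 0] := by
    rw [hv, Units.val_mul, hAi, hB']; decide
  have hgv : (γ : Matrix (Fin 6) (Fin 6) ℤ) *ᵥ v = ![-4, 2, 13, -24, 17, -2] := by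
    rw [hγ', hv']; decide
  have hgiv : ((γ⁻¹ : GL (Fin 6) ℤ) : Matrix (Fin 6) (Fin 6) ℤ) *ᵥ v
      = ![-63, 114, -167, 108, -56, 2] := by
    rw [hγi, hv']; decide
  refine ⟨hv', ?_, ?_⟩
  · rw [hgv]; right; right; right; rfl
  · have e0 : (fun i => (v i : ℚ)) = ![-4, 11, -16, 11, -4, 0] := by
      funext i; rw [hv']; fin_cases i <;> norm_num
    have e1 : (fun i => (((γ : Matrix (Fin 6) (Fin 6) ℤ) *ᵥ v) i : ℚ))
        = ![-4, 2, 13, -24, 17, -2] := by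
      funext i; rw [hgv]; fin_cases i <;> norm_num
    have e2 : (fun i => ((((γ⁻¹ : GL (Fin 6) ℤ) : Matrix (Fin 6) (Fin 6) ℤ) *ᵥ v) i : ℚ))
        = ![-63, 114, -167, 108, -56, 2] := by
      funext i; rw [hgiv]; fin_cases i <;> norm_num
    rw [e0, e1, e2]
    rw [Fintype.linearIndependent_iff]
    intro c hc
    have h0 := congrFun hc 0
    have h1 := congrFun hc 1
    have h2 := congrFun hc 2
    simp [Fin.sum_univ_three] at h0 h1 h2
    have hc0 : c 0 = 0 := by linarith
    have hc1 : c 1 = 0 := by linarith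
    have hc2 : c 2 = 0 := by linarith
    intro i
    fin_cases i <;> assumption
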